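/- Under the β-polygon flow, the energy F_α(X) = (1/α)∑_{j=0}^{N-1} l_j^α with α = β + 2 satisfies dF_α/dt = -∑_{j=0}^{N-1} | l_j^β (X_{j+1} - X_j) + l_{j-1}^β (X_{j-1} - X_j) |², and in particular F_α is nonincreasing along the flow. -/

import Mathlib

/-- The right-hand side of the β-polygon flow:
`(M_X X)_j = l_j^β (X_{j+1} - X_j) + l_{j-1}^β (X_{j-1} - X_j)` with `l_j = ‖X_{j+1} - X_j‖`. -/
noncomputable def flowRHS {N : ℕ} [NeZero N] (β : ℝ) (X : ZMod N → ℂ) (j : ZMod N) : ℂ :=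
  ((‖X (j + 1) - X j‖ ^ β : ℝ) : ℂ) * (X (j + 1) - X j)
    + ((‖X (j - 1) - X j‖ ^ β : ℝ) : ℂ) * (X (j - 1) - X j)

private lemma key_deriv {c : ℝ → ℂ} {v : ℂ} {t : ℝ} (hc : HasDerivAt c v t) (β : ℝ) (hβ : 0 < β) :
    HasDerivAt (fun s => ‖c s‖ ^ (β + 2))
      ((β + 2) * ‖c t‖ ^ β * ((starRingEnd ℂ) (c t) * v).re) t := by
  have hre : HasDerivAt (fun s => (c s).re) v.re t :=
    Complex.reCLM.hasFDerivAt.comp_hasDerivAt t hc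
  have him : HasDerivAt (fun s => (c s).im) v.im t :=
    Complex.imCLM.hasFDerivAt.comp_hasDerivAt t hc
  have hu : HasDerivAt (fun s => Complex.normSq (c s))
      (2 * ((c t).re * v.re + (c t).im * v.im)) t := by
    have h := (hre.mul hre).add (him.mul him)
    simp only [Complex.normSq_apply]
    exact h.congr_deriv (by ring)
  set p := (β + 2) / 2 with hp
  have hp1 : 1 ≤ p := by rw [hp]; linarith
  have hcomp := (Real.hasDerivAt_rpow_const (x := Complex.normSq (c t)) (p := p)
      (Or.inr hp1)).comp t hu
  have hfun : ∀ s, Complex.normSq (c s) ^ p = ‖c s‖ ^ (β + 2) := by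
    intro s
    rw [Complex.normSq_eq_norm_sq, ← Real.rpow_natCast ‖c s‖ 2,
      ← Real.rpow_mul (norm_nonneg _)]
    congr 1
    push_cast
    rw [hp]; ring
  have hval : Complex.normSq (c t) ^ (p - 1) = ‖c t‖ ^ β := by
    rw [Complex.normSq_eq_norm_sq, ← Real.rpow_natCast ‖c t‖ 2,
      ← Real.rpow_mul (norm_nonneg _)]
    congr 1
    push_cast
    rw [hp]; ring
  have := hcomp
  simp only [Function.comp_def] at this
  have heq : (fun s => Complex.normSq (c s) ^ p) = fun s => ‖c s‖ ^ (β + 2) :=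
    funext hfun
  rw [heq] at this
  refine this.congr_deriv ?_
  rw [hval]
  simp [Complex.mul_re, Complex.conj_re, Complex.conj_im, hp]
  ring

private lemma sum_telescope {N : ℕ} [NeZero N] (w : ZMod N → ℂ) :
    ∑ j, ((starRingEnd ℂ) (w j) *
        ((w (j+1) - w j) - (w j - w (j-1)))).re
      = -∑ j, ‖w j - w (j-1)‖ ^ 2 := by
  set G : ZMod N → ℂ := fun j => w j - w (j-1) with hG
  have h1 : ∑ j, ((starRingEnd ℂ) (w j) * G (j+1)).re
      = ∑ j, ((starRingEnd ℂ) (w (j-1)) * G j).re := by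
    apply Fintype.sum_equiv (Equiv.addRight (1 : ZMod N))
    intro x
    simp [Equiv.coe_addRight, add_sub_cancel_right]
  calc ∑ j, ((starRingEnd ℂ) (w j) * ((w (j+1) - w j) - (w j - w (j-1)))).re
      = ∑ j, (((starRingEnd ℂ) (w j) * G (j+1)).re - ((starRingEnd ℂ) (w j) * G j).re) := by
        apply Finset.sum_congr rfl
        intro j _
        simp only [hG]
        rw [← Complex.sub_re, ← mul_sub]
        ring_nf
    _ = ∑ j, ((starRingEnd ℂ) (w (j-1)) * G j).re - ∑ j, ((starRingEnd ℂ) (w j) * G j).re := by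
        rw [Finset.sum_sub_distrib, h1]
    _ = ∑ j, (((starRingEnd ℂ) (w (j-1)) - (starRingEnd ℂ) (w j)) * G j).re := by
        rw [← Finset.sum_sub_distrib]
        apply Finset.sum_congr rfl
        intro j _
        rw [sub_mul, Complex.sub_re]
    _ = -∑ j, ‖G j‖ ^ 2 := by
        rw [← Finset.sum_neg_distrib]
        apply Finset.sum_congr rfl
        intro j _
        have : (starRingEnd ℂ) (w (j-1)) - (starRingEnd ℂ) (w j) = (starRingEnd ℂ) (-(G j)) := by
          simp [hG, map_sub]
        rw [this]
        simp only [map_neg, neg_mul]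
        rw [← Complex.normSq_eq_conj_mul_self]
        simp [Complex.normSq_eq_norm_sq, ← Complex.ofReal_pow]

theorem stmt6 (N : ℕ) [NeZero N] (β : ℝ) (hβ : 0 < β) (X : ℝ → ZMod N → ℂ)
    (hflow : ∀ t j, HasDerivAt (fun s => X s j) (flowRHS β (X t) j) t) :
    ∀ t : ℝ,
      HasDerivAt (fun s => (1 / (β + 2)) * ∑ j, ‖X s (j + 1) - X s j‖ ^ (β + 2))
        (-∑ j, ‖flowRHS β (X t) j‖ ^ 2) t := by
  intro t
  set F := flowRHS β (X t) with hFdef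
  set w : ZMod N → ℂ := fun j => ((‖X t (j+1) - X t j‖ ^ β : ℝ) : ℂ) * (X t (j+1) - X t j) with hw
  have hFw : ∀ j, F j = w j - w (j-1) := by
    intro j
    simp only [hFdef, flowRHS, hw]
    have h1 : (j - 1) + 1 = j := by ring
    rw [h1]
    have h2 : X t (j-1) - X t j = -(X t j - X t (j-1)) := by ring
    rw [h2, norm_neg]
    ring
  have hd : ∀ j : ZMod N, HasDerivAt (fun s => ‖X s (j+1) - X s j‖ ^ (β+2))
      ((β+2) * ‖X t (j+1) - X t j‖ ^ β *
        ((starRingEnd ℂ) (X t (j+1) - X t j) * (F (j+1) - F j)).re) t :=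
    fun j => key_deriv ((hflow t (j+1)).sub (hflow t j)) β hβ
  have hsum := HasDerivAt.fun_sum (fun j (_ : j ∈ Finset.univ) => hd j)
  have hmain := hsum.const_mul (1 / (β + 2))
  refine hmain.congr_deriv ?_
  have hβ2 : (β : ℝ) + 2 ≠ 0 := by linarith
  rw [Finset.mul_sum]
  have hterm : ∀ j : ZMod N, 1 / (β + 2) * ((β+2) * ‖X t (j+1) - X t j‖ ^ β *
        ((starRingEnd ℂ) (X t (j+1) - X t j) * (F (j+1) - F j)).re)
      = ((starRingEnd ℂ) (w j) * ((w (j+1) - w j) - (w j - w (j-1)))).re := by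
    intro j
    rw [hw]
    simp only [map_mul, Complex.conj_ofReal]
    rw [mul_assoc ((‖X t (j+1) - X t j‖ ^ β : ℝ) : ℂ), Complex.re_ofReal_mul]
    have hFj : (F (j+1) - F j) = ((w (j+1) - w j) - (w j - w (j-1))) := by
      rw [hFw (j+1), hFw j, add_sub_cancel_right]
    rw [← hFj]
    field_simp
  rw [Finset.sum_congr rfl (fun j _ => hterm j), sum_telescope]
  congr 1
  apply Finset.sum_congr rfl
  intro j _
  rw [hFw j]
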